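/- Let S : [0,∞) → (0,∞) be differentiable with S' = −σ S V, where σ > 0 is constant and V : [0,∞) → ℝ is continuous, nonnegative, and ∫₀^∞ V(t) dt < ∞. Then U(t) := S(t) − ln S(t) satisfies U'(t) ≤ σ V(t)(1 − S(t)) ≤ σ V(t)·max{1, S(0)}, and in particular U is bounded on [0,∞), hence inf_{t≥0} S(t) > 0. -/

import Mathlib

open Filter MeasureTheory

theorem stmt_17 (σ : ℝ) (hσ : 0 < σ) (S V : ℝ → ℝ)
    (hS_pos : ∀ t ≥ (0 : ℝ), 0 < S t)
    (hS_diff : Differentiable ℝ S)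
    (hode : ∀ t ≥ (0 : ℝ), HasDerivAt S (-σ * S t * V t) t)
    (hV_cont : Continuous V)
    (hV_nonneg : ∀ t ≥ (0 : ℝ), 0 ≤ V t)
    (hV_int : IntegrableOn V (Set.Ici 0)) :
    (∀ t ≥ (0 : ℝ),
      deriv (fun s => S s - Real.log (S s)) t ≤ σ * V t * (1 - S t) ∧
      σ * V t * (1 - S t) ≤ σ * V t * max 1 (S 0)) ∧
    (∃ C : ℝ, ∀ t ≥ (0 : ℝ), S t - Real.log (S t) ≤ C) ∧
    (∃ ε > (0 : ℝ), ∀ t ≥ (0 : ℝ), ε ≤ S t) := by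
  set M : ℝ := max 1 (S 0) with hM
  have hM1 : (1 : ℝ) ≤ M := le_max_left _ _
  -- derivative of U
  have hU : ∀ t ≥ (0 : ℝ), HasDerivAt (fun s => S s - Real.log (S s))
      (σ * V t * (1 - S t)) t := by
    intro t ht
    have h1 := hode t ht
    have h2 : HasDerivAt (fun s => Real.log (S s)) ((-σ * S t * V t) / S t) t :=
      h1.log (hS_pos t ht).ne'
    have h3 := h1.sub h2
    convert h3 using 1
    · rfl
    · rfl
    · rfl
    rw [show (-σ * S t * V t) / S t = -σ * V t by
      rw [mul_div_right_comm, mul_div_assoc, div_self (hS_pos t ht).ne', mul_one]]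
    ring
  have hbound : ∀ t ≥ (0 : ℝ), σ * V t * (1 - S t) ≤ σ * V t * M := by
    intro t ht
    have : (1 : ℝ) - S t ≤ M := by
      have := hS_pos t ht; linarith
    exact mul_le_mul_of_nonneg_left this (mul_nonneg hσ.le (hV_nonneg t ht))
  -- boundedness of U
  have hcontf : Continuous (fun s => σ * V s * (1 - S s)) := by
    exact (continuous_const.mul hV_cont).mul (continuous_const.sub hS_diff.continuous)
  have hC : ∀ t ≥ (0 : ℝ), S t - Real.log (S t) ≤
      (S 0 - Real.log (S 0)) + σ * M * ∫ s in Set.Ici (0:ℝ), V s := by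
    intro t ht
    have hftc : (∫ s in (0:ℝ)..t, σ * V s * (1 - S s))
        = (S t - Real.log (S t)) - (S 0 - Real.log (S 0)) := by
      apply intervalIntegral.integral_eq_sub_of_hasDerivAt
      · intro s hs
        rw [Set.uIcc_of_le ht] at hs
        exact hU s hs.1
      · exact hcontf.intervalIntegrable _ _
    have h1 : (∫ s in (0:ℝ)..t, σ * V s * (1 - S s))
        ≤ ∫ s in (0:ℝ)..t, σ * M * V s := by
      apply intervalIntegral.integral_mono_on ht (hcontf.intervalIntegrable _ _)
        ((continuous_const.mul hV_cont).intervalIntegrable _ _)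
      intro s hs
      have := hbound s hs.1
      show σ * V s * (1 - S s) ≤ σ * M * V s
      linarith [this]
    have h2 : (∫ s in (0:ℝ)..t, σ * M * V s) = σ * M * ∫ s in (0:ℝ)..t, V s := by
      simp [intervalIntegral.integral_const_mul]
    have h3 : (∫ s in (0:ℝ)..t, V s) ≤ ∫ s in Set.Ici (0:ℝ), V s := by
      rw [intervalIntegral.integral_of_le ht]
      apply setIntegral_mono_set hV_int
      · filter_upwards [self_mem_ae_restrict (measurableSet_Ici : MeasurableSet (Set.Ici (0:ℝ)))]
          with s hs
        exact hV_nonneg s hs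
      · exact (Set.Ioc_subset_Icc_self.trans Set.Icc_subset_Ici_self : Set.Ioc (0:ℝ) t ⊆ _).eventuallyLE
    have hMσ : 0 ≤ σ * M := mul_nonneg hσ.le (by linarith)
    nlinarith [hftc, h1, h2, h3]
  refine ⟨?_, ⟨_, hC⟩, ?_⟩
  · intro t ht
    rw [(hU t ht).deriv]
    exact ⟨le_rfl, hbound t ht⟩
  · set C : ℝ := (S 0 - Real.log (S 0)) + σ * M * ∫ s in Set.Ici (0:ℝ), V s with hCdef
    refine ⟨Real.exp (-C), Real.exp_pos _, ?_⟩
    intro t ht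
    have h1 : Real.log (S t) ≥ S t - C := by have := hC t ht; linarith
    have h2 : -C ≤ Real.log (S t) := by have := hS_pos t ht; linarith
    calc Real.exp (-C) ≤ Real.exp (Real.log (S t)) := Real.exp_le_exp.mpr h2
      _ = S t := Real.exp_log (hS_pos t ht)
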